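/- Let Σ be a Hermitian 2n×2n matrix and Ω_n the standard symplectic form. If (1/ħ)Σ satisfies the uncertainty relation (2/ħ)Σ ≥ iΩ_n, and X ∈ ℝ^{2×2}, Y ∈ Sym(ℝ^{2×2}) satisfy (2/ħ)Y + i X Ω₁ X^T ≥ i Ω₁, then the matrix Σ' = diag(X, I) Σ diag(X^T, I) + diag(Y, 0) also satisfies (2/ħ)Σ' ≥ i Ω_{n}, where diag(X,I) acts as X on the first mode and identity on the remaining n-1 modes. -/

import Mathlib

open Matrix
open scoped ComplexOrder

/-- The standard symplectic form `Ω_k = ⊕_{i=1}^k [[0,1],[-1,0]]` on `ℝ^{2k}`. -/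
def symplecticForm (k : ℕ) : Matrix (Fin (2 * k)) (Fin (2 * k)) ℝ :=
  Matrix.of fun i j =>
    if i.val + 1 = j.val ∧ i.val % 2 = 0 then 1
    else if j.val + 1 = i.val ∧ j.val % 2 = 0 then -1
    else 0

lemma psd_fromBlocks_zero {n m : Type*} [Fintype n] [Fintype m] [DecidableEq n] [DecidableEq m]
    {A : Matrix n n ℂ} (hA : A.PosSemidef) :
    (Matrix.fromBlocks A 0 0 (0 : Matrix m m ℂ)).PosSemidef := by
  rw [Matrix.posSemidef_iff_dotProduct_mulVec]
  constructor
  · simp [Matrix.IsHermitian, Matrix.fromBlocks_conjTranspose, hA.isHermitian.eq]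
  · intro x
    have h := hA.dotProduct_mulVec_nonneg (x ∘ Sum.inl)
    simp only [Matrix.fromBlocks_mulVec, Matrix.zero_mulVec, add_zero, zero_add]
    simpa [dotProduct, Fintype.sum_sum_type] using h

lemma map_mul_ofReal {n : Type*} [Fintype n] (A B : Matrix n n ℝ) :
    (A * B).map Complex.ofReal = A.map Complex.ofReal * B.map Complex.ofReal := by
  ext i j
  simp [Matrix.mul_apply]

lemma map_smul_ofReal {n : Type*} (c : ℝ) (A : Matrix n n ℝ) :
    (c • A).map Complex.ofReal = c • A.map Complex.ofReal := by
  ext i j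
  simp [Complex.ofReal_mul, Complex.real_smul]

lemma conjTranspose_map_ofReal {n : Type*} (A : Matrix n n ℝ) :
    (A.map Complex.ofReal)ᴴ = Aᵀ.map Complex.ofReal := by
  ext i j
  simp [Matrix.conjTranspose_apply, Complex.conj_ofReal]

/-- A one-mode CPTP Gaussian channel `(X, Y)` (i.e. satisfying
`(2/hbar)Y + i X Ω₁ Xᵀ ≥ i Ω₁`) maps a physical covariance matrix `Σ` of `n = k+1` modes
(i.e. `(2/hbar)Σ ≥ i Ω_n`) to another physical covariance matrix
`Σ' = diag(X, I) Σ diag(Xᵀ, I) + diag(Y, 0)`. -/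
theorem channel_preserves_uncertainty (k : ℕ) (hbar : ℝ) (hbar_pos : 0 < hbar)
    (Sigma : Matrix (Fin 2 ⊕ Fin (2 * k)) (Fin 2 ⊕ Fin (2 * k)) ℂ) (hSigma : Sigma.IsHermitian)
    (X Y : Matrix (Fin 2) (Fin 2) ℝ) (hY : Y.IsSymm)
    (hphys : ((2 / hbar) • Sigma -
      Complex.I • (Matrix.fromBlocks !![0, 1; -1, 0] 0 0 (symplecticForm k)).map
        Complex.ofReal).PosSemidef)
    (hchannel : (((2 / hbar) • Y).map Complex.ofReal +
        Complex.I • (X * !![0, 1; -1, 0] * Xᵀ).map Complex.ofReal -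
        Complex.I • (!![(0 : ℝ), 1; -1, 0]).map Complex.ofReal).PosSemidef) :
    ((2 / hbar) • ((Matrix.fromBlocks (X.map Complex.ofReal) 0 0 1) * Sigma *
          (Matrix.fromBlocks (Xᵀ.map Complex.ofReal) 0 0 1) +
        Matrix.fromBlocks (Y.map Complex.ofReal) 0 0 0) -
      Complex.I • (Matrix.fromBlocks !![0, 1; -1, 0] 0 0 (symplecticForm k)).map
        Complex.ofReal).PosSemidef := by
  set M : Matrix (Fin 2 ⊕ Fin (2*k)) (Fin 2 ⊕ Fin (2*k)) ℂ :=
    Matrix.fromBlocks (X.map Complex.ofReal) 0 0 1 with hM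
  have hMH : Mᴴ = Matrix.fromBlocks (Xᵀ.map Complex.ofReal) 0 0 1 := by
    simp [hM, Matrix.fromBlocks_conjTranspose, conjTranspose_map_ofReal]
  have h1 := hphys.mul_mul_conjTranspose_same M
  have h2 := psd_fromBlocks_zero (m := Fin (2*k)) hchannel
  have key :
      ((2 / hbar) • (M * Sigma *
          (Matrix.fromBlocks (Xᵀ.map Complex.ofReal) 0 0 1) +
        Matrix.fromBlocks (Y.map Complex.ofReal) 0 0 0) -
      Complex.I • (Matrix.fromBlocks !![0, 1; -1, 0] 0 0 (symplecticForm k)).map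
        Complex.ofReal) =
      M * ((2 / hbar) • Sigma -
        Complex.I • (Matrix.fromBlocks !![0, 1; -1, 0] 0 0 (symplecticForm k)).map
          Complex.ofReal) * Mᴴ +
      Matrix.fromBlocks (((2 / hbar) • Y).map Complex.ofReal +
        Complex.I • (X * !![0, 1; -1, 0] * Xᵀ).map Complex.ofReal -
        Complex.I • (!![(0 : ℝ), 1; -1, 0]).map Complex.ofReal) 0 0 0 := by
    rw [hMH, Matrix.mul_sub, Matrix.sub_mul, Matrix.mul_smul, Matrix.smul_mul,
      Matrix.mul_smul, Matrix.smul_mul, Matrix.fromBlocks_map, hM,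
      map_smul_ofReal, map_mul_ofReal, map_mul_ofReal,
      Matrix.fromBlocks_multiply, Matrix.fromBlocks_multiply]
    simp only [Matrix.mul_zero, Matrix.zero_mul, Matrix.mul_one, Matrix.one_mul,
      add_zero, zero_add, Matrix.mul_assoc]
    ext (i | i) (j | j) <;>
      simp [Matrix.add_apply, Matrix.sub_apply, Matrix.smul_apply, smul_eq_mul] <;> ring
  rw [key]
  exact h1.add h2
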